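/- If X ⊂ K^n is a correct (poised) set for Lagrange interpolation by polynomials of total degree ≤ m (so #X = #I), then there exist unique coefficients a_{α,β} (α ∈ J, β ∈ I) such that every point of X is a solution of the system x^α = Σ_{β∈I} a_{α,β} x^β for all |α| = m+1; consequently the associated multiplication matrices A_1, ..., A_n commute and are diagonalizable. -/

import Mathlib

open Finset Matrix

/-- Total degree of a multi-index. -/
def mdeg {n : ℕ} (α : Fin n → ℕ) : ℕ := ∑ i, α i

/-- The set `I = {α ∈ ℤ₊ⁿ : |α| ≤ m}` of multi-indices of total degree at most `m`. -/
def Idx (n m : ℕ) : Finset (Fin n → ℕ) :=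
  (Fintype.piFinset fun _ => Finset.range (m + 1)).filter fun α => mdeg α ≤ m

/-- `I` is a lower set of multi-indices. -/
def IsLower {n : ℕ} (I : Finset (Fin n → ℕ)) : Prop :=
  ∀ β ∈ I, ∀ γ : Fin n → ℕ, (∀ i, γ i ≤ β i) → γ ∈ I

/-- `α` belongs to the border `J` of the lower set `I`. -/
def InBorder {n : ℕ} (I : Finset (Fin n → ℕ)) (α : Fin n → ℕ) : Prop :=
  α ∉ I ∧ ∃ β ∈ I, ∃ i : Fin n, α = β + Pi.single i 1

/-- The multiplication matrix `A_i`: its row indexed by `β ∈ I` is the standard basis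
vector at `β + e_i` if `β + e_i ∈ I`, and is `(a_{β+e_i,γ})_{γ∈I}` otherwise. -/
def multMat {K : Type*} [Field K] {n : ℕ} (I : Finset (Fin n → ℕ))
    (a : (Fin n → ℕ) → (Fin n → ℕ) → K) (i : Fin n) : Matrix ↥I ↥I K :=
  fun β γ =>
    if (β : Fin n → ℕ) + Pi.single i 1 ∈ I then
      (if (γ : Fin n → ℕ) = (β : Fin n → ℕ) + Pi.single i 1 then 1 else 0)
    else a ((β : Fin n → ℕ) + Pi.single i 1) γ

/-- The monomial vector `v(x) = (x^β)_{β ∈ I}`. -/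
def monVec {K : Type*} [Field K] {n : ℕ} (I : Finset (Fin n → ℕ)) (x : Fin n → K) :
    ↥I → K :=
  fun β => ∏ i, x i ^ (β : Fin n → ℕ) i

/-- `x` is a solution of the system (1): `x^α = Σ_{β∈I} a_{α,β} x^β` for all `|α| = m+1`. -/
def IsSol {K : Type*} [Field K] {n : ℕ} (m : ℕ)
    (a : (Fin n → ℕ) → (Fin n → ℕ) → K) (x : Fin n → K) : Prop :=
  ∀ α : Fin n → ℕ, mdeg α = m + 1 →
    ∏ i, x i ^ α i = ∑ β ∈ Idx n m, a α β * ∏ i, x i ^ β i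

/-- `x` is a solution of the system for a general lower set `I` with border `J`. -/
def IsSolB {K : Type*} [Field K] {n : ℕ} (I : Finset (Fin n → ℕ))
    (a : (Fin n → ℕ) → (Fin n → ℕ) → K) (x : Fin n → K) : Prop :=
  ∀ α : Fin n → ℕ, InBorder I α →
    ∏ i, x i ^ α i = ∑ β ∈ I, a α β * ∏ i, x i ^ β i

/-- A square matrix is diagonalizable (semisimple). -/
def Diagonalizable {K : Type*} [Field K] {ι : Type*} [Fintype ι] [DecidableEq ι]
    (A : Matrix ι ι K) : Prop :=
  ∃ P : Matrix ι ι K, IsUnit P.det ∧ (P⁻¹ * A * P).IsDiag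

/-- The polynomial `P_α = x^α − Σ_{β∈I} a_{α,β} x^β`. -/
noncomputable def Pb {K : Type*} [Field K] {n : ℕ} (I : Finset (Fin n → ℕ))
    (a : (Fin n → ℕ) → (Fin n → ℕ) → K) (α : Fin n → ℕ) : MvPolynomial (Fin n) K :=
  MvPolynomial.monomial (Finsupp.equivFunOnFinite.symm α) 1 -
    ∑ β ∈ I, MvPolynomial.C (a α β) * MvPolynomial.monomial (Finsupp.equivFunOnFinite.symm β) 1

/-- The ideal generated by the polynomials `P_α`, `α ∈ J`. -/
noncomputable def PIdeal {K : Type*} [Field K] {n : ℕ} (I : Finset (Fin n → ℕ))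
    (a : (Fin n → ℕ) → (Fin n → ℕ) → K) : Ideal (MvPolynomial (Fin n) K) :=
  Ideal.span {p | ∃ α : Fin n → ℕ, InBorder I α ∧ p = Pb I a α}

/-- auxiliary -/
lemma mem_Idx_of_mdeg_le {n m : ℕ} {α : Fin n → ℕ} (h : mdeg α ≤ m) : α ∈ Idx n m := by
  refine Finset.mem_filter.2 ⟨Fintype.mem_piFinset.2 fun i => Finset.mem_range.2 ?_, h⟩
  have : α i ≤ mdeg α := Finset.single_le_sum (f := α) (fun j _ => Nat.zero_le _) (Finset.mem_univ i)
  omega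

lemma mdeg_mem_Idx {n m : ℕ} {α : Fin n → ℕ} (h : α ∈ Idx n m) : mdeg α ≤ m :=
  (Finset.mem_filter.1 h).2

lemma mdeg_add_single {n : ℕ} (β : Fin n → ℕ) (i : Fin n) :
    mdeg (β + Pi.single i 1) = mdeg β + 1 := by
  unfold mdeg
  simp only [Pi.add_apply, Finset.sum_add_distrib]
  congr 1
  simp [Pi.single_apply]

lemma prod_pow_add_single {K : Type*} [Field K] {n : ℕ} (x : Fin n → K) (β : Fin n → ℕ)
    (i : Fin n) : ∏ j, x j ^ ((β + Pi.single i 1 : Fin n → ℕ) j) = x i * ∏ j, x j ^ β j := by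
  simp only [Pi.add_apply, pow_add, Finset.prod_mul_distrib]
  rw [mul_comm]
  congr 1
  rw [Fintype.prod_eq_single i (fun j hj => by simp [Pi.single_apply, hj])]
  simp


/-- If `X` is a poised set for degree-`m` interpolation, then there exist unique
coefficients `a_{α,β}` making every point of `X` a solution of the system; consequently
the associated multiplication matrices commute and are diagonalizable. -/
theorem stmt_10 {K : Type*} [Field K] [IsAlgClosed K] {n m : ℕ} (X : Finset (Fin n → K))
    (hcard : X.card = (Idx n m).card)
    (hpoised : ∀ f : ↥X → K, ∃! c : ↥(Idx n m) → K,
      ∀ x : ↥X, ∑ β : ↥(Idx n m), c β * ∏ i, (x : Fin n → K) i ^ (β : Fin n → ℕ) i = f x) :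
    ∃ a : (Fin n → ℕ) → (Fin n → ℕ) → K,
      (∀ x ∈ X, IsSol m a x) ∧
      (∀ a' : (Fin n → ℕ) → (Fin n → ℕ) → K, (∀ x ∈ X, IsSol m a' x) →
        ∀ α β : Fin n → ℕ, mdeg α = m + 1 → β ∈ Idx n m → a' α β = a α β) ∧
      (∀ i j, multMat (Idx n m) a i * multMat (Idx n m) a j
          = multMat (Idx n m) a j * multMat (Idx n m) a i) ∧
      ∀ i, Diagonalizable (multMat (Idx n m) a i) := by
  classical
  choose c hc hu using fun α : Fin n → ℕ =>
    hpoised (fun x => ∏ i, (x : Fin n → K) i ^ α i)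
  set a : (Fin n → ℕ) → (Fin n → ℕ) → K :=
    fun α β => if h : β ∈ Idx n m then c α ⟨β, h⟩ else 0 with ha
  have hconv : ∀ (b : ↥(Idx n m) → K) (x : Fin n → K),
      ∑ β ∈ Idx n m, (fun β => if h : β ∈ Idx n m then b ⟨β, h⟩ else 0) β * ∏ i, x i ^ β i
        = ∑ β : ↥(Idx n m), b β * ∏ i, x i ^ (β : Fin n → ℕ) i := by
    intro b x
    rw [← Finset.sum_coe_sort]
    refine Finset.sum_congr rfl fun β _ => ?_
    simp
  have hsolX : ∀ x ∈ X, IsSol m a x := by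
    intro x hx α hα
    have := hc α ⟨x, hx⟩
    simp only [ha]
    rw [hconv (c α) x]
    exact this.symm
  refine ⟨a, hsolX, ?_, ?_⟩
  · intro a' ha' α β hα hβ
    have h1 : ∀ x : ↥X,
        ∑ γ : ↥(Idx n m), a' α (γ : Fin n → ℕ) * ∏ i, (x : Fin n → K) i ^ (γ : Fin n → ℕ) i
          = ∏ i, (x : Fin n → K) i ^ α i := by
      intro x
      rw [Finset.sum_coe_sort (Idx n m) (fun γ => a' α γ * ∏ i, (x : Fin n → K) i ^ γ i)]
      exact (ha' x x.2 α hα).symm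
    have := hu α (fun γ => a' α (γ : Fin n → ℕ)) h1
    have h2 := congrFun this ⟨β, hβ⟩
    simp only [ha]
    rw [dif_pos hβ]
    exact h2
  · -- matrix part
    have hcards : Fintype.card ↥X = Fintype.card ↥(Idx n m) := by
      simp [hcard]
    let e : ↥X ≃ ↥(Idx n m) := Fintype.equivOfCardEq hcards
    set P : Matrix ↥(Idx n m) ↥(Idx n m) K :=
      fun β γ => ∏ j, ((e.symm γ : Fin n → K)) j ^ (β : Fin n → ℕ) j with hPdef
    set D : Fin n → Matrix ↥(Idx n m) ↥(Idx n m) K :=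
      fun i => Matrix.diagonal fun γ : ↥(Idx n m) => ((e.symm γ : Fin n → K)) i with hDdef
    -- key vector identity
    have hAv : ∀ (i : Fin n) (x : Fin n → K), x ∈ X → ∀ β : ↥(Idx n m),
        ∑ δ : ↥(Idx n m), multMat (Idx n m) a i β δ * ∏ j, x j ^ (δ : Fin n → ℕ) j
          = x i * ∏ j, x j ^ (β : Fin n → ℕ) j := by
      intro i x hx β
      by_cases hmem : (β : Fin n → ℕ) + Pi.single i 1 ∈ Idx n m
      · simp only [multMat, if_pos hmem]
        rw [Fintype.sum_eq_single (⟨(β : Fin n → ℕ) + Pi.single i 1, hmem⟩ : ↥(Idx n m))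
          (fun δ hδ => by rw [if_neg (fun hcc => hδ (Subtype.ext hcc)), zero_mul])]
        rw [if_pos rfl, one_mul]
        exact prod_pow_add_single x β i
      · simp only [multMat, if_neg hmem]
        have hdeg : mdeg ((β : Fin n → ℕ) + Pi.single i 1) = m + 1 := by
          have h1 := mdeg_mem_Idx β.2
          have h2 := mdeg_add_single (β : Fin n → ℕ) i
          by_contra hne
          exact hmem (mem_Idx_of_mdeg_le (by omega))
        have hsol := hsolX x hx ((β : Fin n → ℕ) + Pi.single i 1) hdeg
        rw [prod_pow_add_single x (β : Fin n → ℕ) i, ← Finset.sum_coe_sort] at hsol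
        exact hsol.symm
    have hAP : ∀ i, multMat (Idx n m) a i * P = P * D i := by
      intro i
      ext β γ
      rw [Matrix.mul_apply, Matrix.mul_diagonal]
      have := hAv i (e.symm γ) (e.symm γ).2 β
      simp only [hPdef]
      rw [this, mul_comm]
    have hPunit : IsUnit P.det := by
      rw [← Matrix.det_transpose]
      rw [← Matrix.isUnit_iff_isUnit_det]
      rw [← Matrix.mulVec_injective_iff_isUnit]
      intro c1 c2 h12
      have key : ∀ (b : ↥(Idx n m) → K) (x : ↥X),
          Pᵀ.mulVec b (e x) = ∑ β : ↥(Idx n m), b β * ∏ i, (x : Fin n → K) i ^ (β : Fin n → ℕ) i := by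
        intro b x
        simp only [Matrix.mulVec, dotProduct, Matrix.transpose_apply, hPdef, Equiv.symm_apply_apply]
        exact Finset.sum_congr rfl fun β _ => by
          rw [mul_comm]
          congr 1
          show ∏ j, ((e.symm (e x) : Fin n → K)) j ^ (β : Fin n → ℕ) j = _
          rw [Equiv.symm_apply_apply]
      exact (hpoised fun x => ∑ β : ↥(Idx n m), c2 β * ∏ i, (x : Fin n → K) i ^ (β : Fin n → ℕ) i).unique
        (fun x => by rw [← key c1 x, h12, key c2 x]) (fun x => rfl)
    have hAeq : ∀ i, multMat (Idx n m) a i = P * D i * P⁻¹ := by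
      intro i
      rw [← hAP i, Matrix.mul_nonsing_inv_cancel_right _ _ hPunit]
    have cancel : ∀ A B : Matrix ↥(Idx n m) ↥(Idx n m) K, (A * P⁻¹) * (P * B) = A * B := by
      intro A B
      rw [Matrix.mul_assoc A, ← Matrix.mul_assoc P⁻¹, Matrix.nonsing_inv_mul _ hPunit,
        Matrix.one_mul]
    have key2 : ∀ i j, multMat (Idx n m) a i * multMat (Idx n m) a j
        = P * (D i * D j) * P⁻¹ := by
      intro i j
      rw [hAeq i, hAeq j, Matrix.mul_assoc P (D j) P⁻¹, cancel, ← Matrix.mul_assoc,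
        ← Matrix.mul_assoc, Matrix.mul_assoc P (D i) (D j)]
    have hDcomm : ∀ i j, D i * D j = D j * D i := by
      intro i j
      simp only [hDdef, Matrix.diagonal_mul_diagonal]
      exact congrArg Matrix.diagonal (funext fun γ => mul_comm _ _)
    refine ⟨fun i j => by rw [key2 i j, key2 j i, hDcomm i j], fun i => ⟨P, hPunit, ?_⟩⟩
    rw [Matrix.mul_assoc, hAP i, Matrix.nonsing_inv_mul_cancel_left _ _ hPunit]
    exact Matrix.isDiag_diagonal _
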